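/- Let n ≥ 2, let I ⊆ ℝ be an interval, and let ω = (ω₁,…,ωₙ) be a Chebyshev system on I such that (ω₁,…,ω_{n−1}) is also a Chebyshev system on I. Then for every function f : I → ℝ and any n+1 pairwise distinct points x₁,…,x_{n+1} ∈ I one has [x₂,…,x_{n+1};f]_ω − [x₁,…,xₙ;f]_ω = Dₙ(x₁,…,x_{n+1};f) · V_{n−1}(x₂,…,xₙ) / ( Vₙ(x₂,…,x_{n+1}) · Vₙ(x₁,…,xₙ) ). -/

import Mathlib

/-- `chebV ω x` is the determinant `Vₙ(x₁,…,xₙ)` with `(i,j)` entry `ωᵢ(xⱼ)`. -/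
noncomputable def chebV {n : ℕ} (ω : Fin n → ℝ → ℝ) (x : Fin n → ℝ) : ℝ :=
  Matrix.det (Matrix.of fun i j => ω i (x j))

/-- `chebD ω f x` is the determinant `Dₙ(x₁,…,x_{n+1};f)` whose first `n` rows are
`ωᵢ(x₁),…,ωᵢ(x_{n+1})` and whose last row is `f(x₁),…,f(x_{n+1})`. -/
noncomputable def chebD {n : ℕ} (ω : Fin n → ℝ → ℝ) (f : ℝ → ℝ) (x : Fin (n + 1) → ℝ) : ℝ :=
  Matrix.det (Matrix.of (Fin.snoc (fun i j => ω i (x j)) (fun j => f (x j)) :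
    Fin (n + 1) → Fin (n + 1) → ℝ))

/-- `ω = (ω₁,…,ωₙ)` is a Chebyshev system on `I`: the `ωᵢ` are continuous on `I` and
`Vₙ(x₁,…,xₙ) ≠ 0` whenever `x₁ < ⋯ < xₙ` in `I`. -/
def IsChebyshevOn {n : ℕ} (ω : Fin n → ℝ → ℝ) (I : Set ℝ) : Prop :=
  (∀ i, ContinuousOn (ω i) I) ∧
    ∀ x : Fin n → ℝ, (∀ i, x i ∈ I) → StrictMono x → chebV ω x ≠ 0

/-- `ω = (ω₁,…,ωₙ)` is a positive Chebyshev system on `I`. -/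
def IsPosChebyshevOn {n : ℕ} (ω : Fin n → ℝ → ℝ) (I : Set ℝ) : Prop :=
  (∀ i, ContinuousOn (ω i) I) ∧
    ∀ x : Fin n → ℝ, (∀ i, x i ∈ I) → StrictMono x → 0 < chebV ω x

/-- The generalized divided difference `[x₁,…,x_{n+1};f]_ω = D_n(x₁,…,x_{n+1};f)/V_{n+1}(x₁,…,x_{n+1})`,
where the numerator is formed from the first `n` functions of the `(n+1)`-element system `ω`. -/
noncomputable def divDiff {n : ℕ} (ω : Fin (n + 1) → ℝ → ℝ) (f : ℝ → ℝ)
    (x : Fin (n + 1) → ℝ) : ℝ :=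
  chebD (fun i : Fin n => ω i.castSucc) f x / chebV ω x

/-- `f` is `ω`-`(n+1)`-convex on `I` for the `(n+1)`-element system `ω`. -/
def IsConvexOmega {n : ℕ} (ω : Fin (n + 1) → ℝ → ℝ) (I : Set ℝ) (f : ℝ → ℝ) : Prop :=
  ∀ x : Fin (n + 1) → ℝ, (∀ i, x i ∈ I) → StrictMono x →
    ∀ c : Fin (n + 1) → ℝ, (∀ i, (∑ k, c k * ω k (x i)) = f (x i)) →
      (∀ t ∈ I, t ≤ x 0 → 0 ≤ (-1 : ℝ) ^ (n + 1) * (f t - ∑ k, c k * ω k t)) ∧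
      (∀ j : Fin n, ∀ t ∈ I, x j.castSucc ≤ t → t ≤ x j.succ →
        0 ≤ (-1 : ℝ) ^ (n + (j : ℕ) + 2) * (f t - ∑ k, c k * ω k t)) ∧
      (∀ t ∈ I, x (Fin.last n) ≤ t → 0 ≤ f t - ∑ k, c k * ω k t)


section Aux

open Matrix Equiv

/-- A Chebyshev system has nonzero `V` at any pairwise distinct points of `I`. -/
lemma chebV_ne_zero_of_injective {n : ℕ} {ω : Fin n → ℝ → ℝ} {I : Set ℝ}
    (hω : IsChebyshevOn ω I) {x : Fin n → ℝ} (hx : ∀ i, x i ∈ I)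
    (hinj : Function.Injective x) : chebV ω x ≠ 0 := by
  set σ := Tuple.sort x with hσ
  have hmono : StrictMono (x ∘ σ) :=
    (Tuple.monotone_sort x).strictMono_of_injective (hinj.comp σ.injective)
  have h := hω.2 (x ∘ σ) (fun i => hx _) hmono
  have hrel : chebV ω (x ∘ σ) = (Equiv.Perm.sign σ : ℤ) * chebV ω x := by
    have : (Matrix.of fun i j => ω i ((x ∘ σ) j)) =
        (Matrix.of fun i j => ω i (x j)).submatrix id σ := rfl
    rw [chebV, this, Matrix.det_permute']
    rfl
  intro h0
  rw [hrel, h0, mul_zero] at h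
  exact h rfl

/-- Desnanot–Jacobi style identity for a block matrix with invertible upper-left block. -/
lemma det_fromBlocks_jacobi {n : ℕ} (E : Matrix (Fin n) (Fin n) ℝ)
    (F : Matrix (Fin n) (Fin 2) ℝ) (G : Matrix (Fin 2) (Fin n) ℝ)
    (H : Matrix (Fin 2) (Fin 2) ℝ) (hE : IsUnit E.det) :
    (Matrix.fromBlocks E F G H).det * E.det =
      (Matrix.fromBlocks E (Matrix.of fun i (_ : Fin 1) => F i 0)
            (Matrix.of fun (_ : Fin 1) j => G 0 j) (Matrix.of fun _ _ => H 0 0)).det *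
          (Matrix.fromBlocks E (Matrix.of fun i (_ : Fin 1) => F i 1)
            (Matrix.of fun (_ : Fin 1) j => G 1 j) (Matrix.of fun _ _ => H 1 1)).det -
        (Matrix.fromBlocks E (Matrix.of fun i (_ : Fin 1) => F i 1)
            (Matrix.of fun (_ : Fin 1) j => G 0 j) (Matrix.of fun _ _ => H 0 1)).det *
          (Matrix.fromBlocks E (Matrix.of fun i (_ : Fin 1) => F i 0)
            (Matrix.of fun (_ : Fin 1) j => G 1 j) (Matrix.of fun _ _ => H 1 0)).det := by
  haveI := E.invertibleOfIsUnitDet hE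
  have hsub : ∀ a b : Fin 2,
      (Matrix.fromBlocks E (Matrix.of fun i (_ : Fin 1) => F i b)
          (Matrix.of fun (_ : Fin 1) j => G a j) (Matrix.of fun _ _ => H a b)).det =
        E.det * (H - G * ⅟E * F) a b := by
    intro a b
    rw [Matrix.det_fromBlocks₁₁]
    congr 1
    rw [Matrix.det_fin_one]
    simp [Matrix.mul_apply, Matrix.sub_apply]
  rw [Matrix.det_fromBlocks₁₁, hsub, hsub, hsub, hsub, Matrix.det_fin_two]
  ring

lemma fromBlocks_eq_submatrix {l m' n o p : Type*} (A : Matrix p p ℝ)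
    (r1 : l → p) (r2 : m' → p) (c1 : n → p) (c2 : o → p) :
    Matrix.fromBlocks (A.submatrix r1 c1) (A.submatrix r1 c2)
        (A.submatrix r2 c1) (A.submatrix r2 c2) =
      A.submatrix (Sum.elim r1 r2) (Sum.elim c1 c2) := by
  ext i j
  cases i <;> cases j <;> rfl

lemma finRotate_castSucc {n : ℕ} (j : Fin n) :
    finRotate (n + 1) j.castSucc = j.succ := by
  rw [finRotate_succ_apply]
  apply Fin.ext
  rw [Fin.val_add_one]
  simp [Fin.ext_iff, (Fin.castSucc_lt_last j).ne]

lemma finRotate_last_eq_zero {n : ℕ} : finRotate (n + 1) (Fin.last n) = 0 := by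
  rw [finRotate_succ_apply, Fin.last_add_one]

end Aux

/-- **Theorem 1.** For a Chebyshev system `ω` of `m+2` functions whose initial `m+1`-element
subsystem is also Chebyshev, the generalized divided differences over consecutive windows of
`m+3` pairwise distinct points of `I` satisfy
`[x₂,…,x_{n+1};f]_ω − [x₁,…,xₙ;f]_ω = Dₙ(x₁,…,x_{n+1};f)·V_{n−1}(x₂,…,xₙ)/(Vₙ(x₂,…,x_{n+1})·Vₙ(x₁,…,xₙ))`. -/
theorem divDiff_sub_divDiff {m : ℕ} (I : Set ℝ) (hI : I.OrdConnected)
    (ω : Fin (m + 2) → ℝ → ℝ)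
    (hω : IsChebyshevOn ω I)
    (hω' : IsChebyshevOn (fun i : Fin (m + 1) => ω i.castSucc) I)
    (f : ℝ → ℝ) (x : Fin (m + 3) → ℝ) (hx : ∀ i, x i ∈ I)
    (hinj : Function.Injective x) :
    divDiff ω f (x ∘ Fin.succ) - divDiff ω f (x ∘ Fin.castSucc) =
      chebD ω f x *
          chebV (fun i : Fin (m + 1) => ω i.castSucc)
            (fun j : Fin (m + 1) => x j.succ.castSucc) /
        (chebV ω (x ∘ Fin.succ) * chebV ω (x ∘ Fin.castSucc)) := by
  classical
  -- the big (m+3)×(m+3) matrix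
  set A : Matrix (Fin (m + 3)) (Fin (m + 3)) ℝ :=
    Matrix.of (Fin.snoc (fun i j => ω i (x j)) (fun j => f (x j)) :
      Fin (m + 3) → Fin (m + 3) → ℝ) with hA
  -- index maps
  set r1 : Fin (m + 1) → Fin (m + 3) := fun i => i.castSucc.castSucc with hr1def
  set c1 : Fin (m + 1) → Fin (m + 3) := fun j => j.succ.castSucc with hc1def
  set r2 : Fin 2 → Fin (m + 3) := ![(Fin.last (m + 1)).castSucc, Fin.last (m + 2)] with hr2def
  set c2 : Fin 2 → Fin (m + 3) := ![Fin.last (m + 2), 0] with hc2def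
  set ρ : Fin (m + 2) → Fin (m + 3) :=
    Fin.snoc (fun i : Fin (m + 1) => i.castSucc.castSucc) (Fin.last (m + 2)) with hρdef
  -- identifications of the sub-determinants
  have hVs : chebV ω (x ∘ Fin.succ) = (A.submatrix Fin.castSucc Fin.succ).det := by
    rw [chebV]; congr 1; ext i j
    simp [hA, Fin.snoc_castSucc]
  have hVc : chebV ω (x ∘ Fin.castSucc) = (A.submatrix Fin.castSucc Fin.castSucc).det := by
    rw [chebV]; congr 1; ext i j
    simp [hA, Fin.snoc_castSucc]
  have hDs : chebD (fun i : Fin (m + 1) => ω i.castSucc) f (x ∘ Fin.succ) =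
      (A.submatrix ρ Fin.succ).det := by
    rw [chebD]; congr 1; ext r j
    refine Fin.lastCases ?_ (fun i => ?_) r <;>
      simp [hA, hρdef, Fin.snoc_castSucc, Fin.snoc_last]
  have hDc : chebD (fun i : Fin (m + 1) => ω i.castSucc) f (x ∘ Fin.castSucc) =
      (A.submatrix ρ Fin.castSucc).det := by
    rw [chebD]; congr 1; ext r j
    refine Fin.lastCases ?_ (fun i => ?_) r <;>
      simp [hA, hρdef, Fin.snoc_castSucc, Fin.snoc_last]
  have hVi : chebV (fun i : Fin (m + 1) => ω i.castSucc)
      (fun j : Fin (m + 1) => x j.succ.castSucc) = (A.submatrix r1 c1).det := by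
    rw [chebV]; congr 1; ext i j
    simp [hA, hr1def, hc1def, Fin.snoc_castSucc]
  -- nonvanishing
  have hVs0 : chebV ω (x ∘ Fin.succ) ≠ 0 :=
    chebV_ne_zero_of_injective hω (fun i => hx _) (hinj.comp (Fin.succ_injective _))
  have hVc0 : chebV ω (x ∘ Fin.castSucc) ≠ 0 :=
    chebV_ne_zero_of_injective hω (fun i => hx _) (hinj.comp (Fin.castSucc_injective _))
  have hVi0 : chebV (fun i : Fin (m + 1) => ω i.castSucc)
      (fun j : Fin (m + 1) => x j.succ.castSucc) ≠ 0 := by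
    apply chebV_ne_zero_of_injective hω' (fun i => hx _)
    intro a b hab
    exact Fin.succ_injective _ (Fin.castSucc_injective _ (hinj hab))
  have hEunit : IsUnit (A.submatrix r1 c1).det := by
    rw [← hVi]; exact isUnit_iff_ne_zero.mpr hVi0
  -- index-map equalities
  have hre : Sum.elim r1 r2 = ⇑(finSumFinEquiv : Fin (m + 1) ⊕ Fin 2 ≃ Fin (m + 3)) := by
    funext i
    rcases i with i | a
    · simp [hr1def, Fin.ext_iff]
    · fin_cases a <;> simp [hr2def, Fin.ext_iff]
  have hce : Sum.elim c1 c2 =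
      ⇑(finRotate (m + 3)) ∘ ⇑(finSumFinEquiv : Fin (m + 1) ⊕ Fin 2 ≃ Fin (m + 3)) := by
    funext i
    rcases i with i | a
    · simp only [Sum.elim_inl, Function.comp_apply, finSumFinEquiv_apply_left]
      have : (Fin.castAdd 2 i : Fin (m + 3)) = (Fin.castSucc (i.castSucc)) := by
        simp [Fin.ext_iff]
      rw [this, finRotate_castSucc, hc1def]
      simp [Fin.ext_iff]
    · fin_cases a
      · simp only [Sum.elim_inr, Function.comp_apply, finSumFinEquiv_apply_right]
        apply Fin.ext
        rw [finRotate_succ_apply, Fin.val_add_one, if_neg (by simp [Fin.ext_iff])]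
        simp [hc2def]
      · simp only [Sum.elim_inr, Function.comp_apply, finSumFinEquiv_apply_right]
        apply Fin.ext
        rw [finRotate_succ_apply, Fin.val_add_one, if_pos (by simp [Fin.ext_iff])]
        simp [hc2def]
  have hr0 : Sum.elim r1 (fun _ : Fin 1 => r2 0) =
      Fin.castSucc ∘ ⇑(finSumFinEquiv : Fin (m + 1) ⊕ Fin 1 ≃ Fin (m + 2)) := by
    funext i
    rcases i with i | a
    · simp [hr1def, Fin.ext_iff]
    · simp [hr2def, Fin.ext_iff]
  have hr1' : Sum.elim r1 (fun _ : Fin 1 => r2 1) =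
      ρ ∘ ⇑(finSumFinEquiv : Fin (m + 1) ⊕ Fin 1 ≃ Fin (m + 2)) := by
    funext i
    rcases i with i | a
    · have : (finSumFinEquiv : Fin (m + 1) ⊕ Fin 1 ≃ Fin (m + 2)) (Sum.inl i) = i.castSucc := by
        simp [Fin.ext_iff]
      simp only [Sum.elim_inl, Function.comp_apply, this, hρdef, Fin.snoc_castSucc]
      rfl
    · have : (finSumFinEquiv : Fin (m + 1) ⊕ Fin 1 ≃ Fin (m + 2)) (Sum.inr a) = Fin.last (m + 1) := by
        simp [Fin.ext_iff]
      simp only [Sum.elim_inr, Function.comp_apply, this, hρdef, Fin.snoc_last]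
      simp [hr2def]
  have hc0 : Sum.elim c1 (fun _ : Fin 1 => c2 0) =
      Fin.succ ∘ ⇑(finSumFinEquiv : Fin (m + 1) ⊕ Fin 1 ≃ Fin (m + 2)) := by
    funext i
    rcases i with i | a
    · simp [hc1def, Fin.ext_iff]
    · simp [hc2def, Fin.ext_iff]
  have hc1' : Sum.elim c1 (fun _ : Fin 1 => c2 1) =
      Fin.castSucc ∘ ⇑(finRotate (m + 2)) ∘
        ⇑(finSumFinEquiv : Fin (m + 1) ⊕ Fin 1 ≃ Fin (m + 2)) := by
    funext i
    rcases i with i | a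
    · have h1 : (finSumFinEquiv : Fin (m + 1) ⊕ Fin 1 ≃ Fin (m + 2)) (Sum.inl i) = i.castSucc := by
        simp [Fin.ext_iff]
      simp only [Sum.elim_inl, Function.comp_apply, h1, finRotate_castSucc]
      rfl
    · have h1 : (finSumFinEquiv : Fin (m + 1) ⊕ Fin 1 ≃ Fin (m + 2)) (Sum.inr a) = Fin.last (m + 1) := by
        simp [Fin.ext_iff]
      simp only [Sum.elim_inr, Function.comp_apply, h1, finRotate_last_eq_zero]
      simp [hc2def, Fin.ext_iff]
  -- apply Jacobi
  have hdj := det_fromBlocks_jacobi (A.submatrix r1 c1) (A.submatrix r1 c2)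
    (A.submatrix r2 c1) (A.submatrix r2 c2) hEunit
  -- rewrite the block matrices as submatrices of A
  have hblock : ∀ (ra : Fin 2 → Fin (m + 3)) (cb : Fin 2 → Fin (m + 3)) (a b : Fin 2),
      (Matrix.fromBlocks (A.submatrix r1 c1)
          (Matrix.of fun i (_ : Fin 1) => (A.submatrix r1 cb) i b)
          (Matrix.of fun (_ : Fin 1) j => (A.submatrix ra c1) a j)
          (Matrix.of fun _ _ => (A.submatrix ra cb) a b)) =
        A.submatrix (Sum.elim r1 (fun _ : Fin 1 => ra a)) (Sum.elim c1 (fun _ : Fin 1 => cb b)) := by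
    intro ra cb a b
    rw [← fromBlocks_eq_submatrix]
    rfl
  rw [fromBlocks_eq_submatrix A r1 r2 c1 c2] at hdj
  rw [hblock r2 c2 0 0, hblock r2 c2 1 1, hblock r2 c2 0 1, hblock r2 c2 1 0] at hdj
  rw [hre, hce, hr0, hr1', hc0, hc1'] at hdj
  -- turn each submatrix determinant into a known quantity
  have key1 : (A.submatrix (⇑(finSumFinEquiv : Fin (m + 1) ⊕ Fin 2 ≃ Fin (m + 3)))
      (⇑(finRotate (m + 3)) ∘ ⇑(finSumFinEquiv : Fin (m + 1) ⊕ Fin 2 ≃ Fin (m + 3)))).det =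
      ((Equiv.Perm.sign (finRotate (m + 3)) : ℤ) : ℝ) * chebD ω f x := by
    have : A.submatrix (⇑(finSumFinEquiv : Fin (m + 1) ⊕ Fin 2 ≃ Fin (m + 3)))
        (⇑(finRotate (m + 3)) ∘ ⇑(finSumFinEquiv : Fin (m + 1) ⊕ Fin 2 ≃ Fin (m + 3))) =
        (A.submatrix id (⇑(finRotate (m + 3)))).submatrix
          ⇑(finSumFinEquiv : Fin (m + 1) ⊕ Fin 2 ≃ Fin (m + 3))
          ⇑(finSumFinEquiv : Fin (m + 1) ⊕ Fin 2 ≃ Fin (m + 3)) := by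
      rw [Matrix.submatrix_submatrix]; rfl
    rw [this, Matrix.det_submatrix_equiv_self, Matrix.det_permute']
    rfl
  have key2 : ∀ (σ : Fin (m + 2) → Fin (m + 3)),
      (A.submatrix (σ ∘ ⇑(finSumFinEquiv : Fin (m + 1) ⊕ Fin 1 ≃ Fin (m + 2)))
        (Fin.succ ∘ ⇑(finSumFinEquiv : Fin (m + 1) ⊕ Fin 1 ≃ Fin (m + 2)))).det =
      (A.submatrix σ Fin.succ).det := by
    intro σ
    rw [show A.submatrix (σ ∘ ⇑(finSumFinEquiv : Fin (m + 1) ⊕ Fin 1 ≃ Fin (m + 2)))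
        (Fin.succ ∘ ⇑(finSumFinEquiv : Fin (m + 1) ⊕ Fin 1 ≃ Fin (m + 2))) =
        (A.submatrix σ Fin.succ).submatrix
          ⇑(finSumFinEquiv : Fin (m + 1) ⊕ Fin 1 ≃ Fin (m + 2))
          ⇑(finSumFinEquiv : Fin (m + 1) ⊕ Fin 1 ≃ Fin (m + 2)) from
      (Matrix.submatrix_submatrix _ _ _ _ _).symm, Matrix.det_submatrix_equiv_self]
  have key3 : ∀ (σ : Fin (m + 2) → Fin (m + 3)),
      (A.submatrix (σ ∘ ⇑(finSumFinEquiv : Fin (m + 1) ⊕ Fin 1 ≃ Fin (m + 2)))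
        (Fin.castSucc ∘ ⇑(finRotate (m + 2)) ∘ ⇑(finSumFinEquiv : Fin (m + 1) ⊕ Fin 1 ≃ Fin (m + 2)))).det =
      ((Equiv.Perm.sign (finRotate (m + 2)) : ℤ) : ℝ) * (A.submatrix σ Fin.castSucc).det := by
    intro σ
    rw [show A.submatrix (σ ∘ ⇑(finSumFinEquiv : Fin (m + 1) ⊕ Fin 1 ≃ Fin (m + 2)))
        (Fin.castSucc ∘ ⇑(finRotate (m + 2)) ∘ ⇑(finSumFinEquiv : Fin (m + 1) ⊕ Fin 1 ≃ Fin (m + 2))) =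
        ((A.submatrix σ Fin.castSucc).submatrix id
          ⇑(finRotate (m + 2))).submatrix
          ⇑(finSumFinEquiv : Fin (m + 1) ⊕ Fin 1 ≃ Fin (m + 2))
          ⇑(finSumFinEquiv : Fin (m + 1) ⊕ Fin 1 ≃ Fin (m + 2)) from by
      rw [Matrix.submatrix_submatrix, Matrix.submatrix_submatrix]; rfl,
      Matrix.det_submatrix_equiv_self, Matrix.det_permute']
  rw [key1, key2, key2, key3, key3] at hdj
  -- evaluate signs
  have hs2 : ((Equiv.Perm.sign (finRotate (m + 2)) : ℤ) : ℝ) = (-1 : ℝ) ^ (m + 1) := by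
    rw [sign_finRotate]; push_cast; ring
  have hs3 : ((Equiv.Perm.sign (finRotate (m + 3)) : ℤ) : ℝ) = (-1 : ℝ) ^ (m + 1) * (-1) := by
    rw [show m + 3 = (m + 2) + 1 from rfl, sign_finRotate]
    push_cast
    rw [pow_succ]
  rw [hs2, hs3] at hdj
  rw [← hVs, ← hVc, ← hDs, ← hDc, ← hVi] at hdj
  -- final algebra
  set ε : ℝ := (-1 : ℝ) ^ (m + 1) with hε
  have hee : ε * ε = 1 := by
    rw [hε, ← pow_add]
    exact Even.neg_one_pow ⟨m + 1, by ring⟩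
  set Ds := chebD (fun i : Fin (m + 1) => ω i.castSucc) f (x ∘ Fin.succ) with hDs'
  set Dc := chebD (fun i : Fin (m + 1) => ω i.castSucc) f (x ∘ Fin.castSucc) with hDc'
  have key : chebD ω f x * chebV (fun i : Fin (m + 1) => ω i.castSucc)
      (fun j : Fin (m + 1) => x j.succ.castSucc) =
      Ds * chebV ω (x ∘ Fin.castSucc) - Dc * chebV ω (x ∘ Fin.succ) := by
    linear_combination (-ε) * hdj -
      (chebD ω f x * chebV (fun i : Fin (m + 1) => ω i.castSucc)
        (fun j : Fin (m + 1) => x j.succ.castSucc) +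
        chebV ω (x ∘ Fin.succ) * Dc - chebV ω (x ∘ Fin.castSucc) * Ds) * hee
  rw [divDiff, divDiff, ← hDs', ← hDc', div_sub_div _ _ hVs0 hVc0, key]
  congr 1
  ring
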